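/- In A = ℝ[X,Y]/(X²+Y²−1), the ideal I = (1+x, y) is not principal. -/

import Mathlib

set_option maxRecDepth 4000


open MvPolynomial

noncomputable abbrev circleRingR : Type :=
  MvPolynomial (Fin 2) ℝ ⧸
    Ideal.span {(X 0 : MvPolynomial (Fin 2) ℝ) ^ 2 + X 1 ^ 2 - 1}

noncomputable abbrev xClass : circleRingR := Ideal.Quotient.mk _ (X 0)

noncomputable abbrev yClass : circleRingR := Ideal.Quotient.mk _ (X 1)


noncomputable section CircleAux

abbrev RR := Polynomial ℝ

/-- c = 1 - X^2 -/
noncomputable def cc : RR := 1 - Polynomial.X ^ 2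

/-- f = Y^2 - C c -/
noncomputable def ff : Polynomial RR := Polynomial.X ^ 2 - Polynomial.C cc

lemma ff_monic : ff.Monic := by
  apply Polynomial.monic_X_pow_sub
  calc (Polynomial.C cc).degree ≤ 0 := Polynomial.degree_C_le
  _ < (2:ℕ) := by norm_num

lemma ff_deg : ff.degree = 2 := by
  have := ff_monic
  unfold ff
  rw [Polynomial.degree_sub_eq_left_of_degree_lt]
  · simp
  · calc (Polynomial.C cc).degree ≤ 0 := Polynomial.degree_C_le
    _ < (Polynomial.X ^ 2 : Polynomial RR).degree := by simp

abbrev AA := AdjoinRoot ff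

noncomputable def elt (p q : RR) : AA := AdjoinRoot.mk ff (Polynomial.C p + Polynomial.C q * Polynomial.X)

lemma repr_exists (a : AA) : ∃ p q : RR, a = elt p q := by
  obtain ⟨g, rfl⟩ := AdjoinRoot.mk_surjective a
  refine ⟨(g %ₘ ff).coeff 0, (g %ₘ ff).coeff 1, ?_⟩
  have h1 : AdjoinRoot.mk ff g = AdjoinRoot.mk ff (g %ₘ ff) := by
    rw [eq_comm, ← sub_eq_zero, ← map_sub, AdjoinRoot.mk_eq_zero]
    exact ⟨-(g /ₘ ff), by have := Polynomial.modByMonic_add_div g ff; linear_combination this⟩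
  have h2 : (g %ₘ ff).degree ≤ 1 := by
    have := Polynomial.degree_modByMonic_lt g ff_monic
    rw [ff_deg] at this
    exact Order.le_of_lt_succ (by exact_mod_cast this)
  rw [h1, elt]
  congr 1
  have := Polynomial.eq_X_add_C_of_degree_le_one h2
  linear_combination this

lemma elt_eq_zero {p q : RR} (h : elt p q = 0) : p = 0 ∧ q = 0 := by
  rw [elt, AdjoinRoot.mk_eq_zero] at h
  have hz : Polynomial.C p + Polynomial.C q * Polynomial.X = 0 := by
    apply Polynomial.eq_zero_of_dvd_of_degree_lt h
    rw [ff_deg]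
    calc (Polynomial.C p + Polynomial.C q * Polynomial.X).degree
        ≤ max (Polynomial.C p).degree (Polynomial.C q * Polynomial.X).degree := Polynomial.degree_add_le _ _
      _ ≤ 1 := by
          apply max_le
          · exact le_trans Polynomial.degree_C_le (by norm_num)
          · calc (Polynomial.C q * Polynomial.X).degree ≤ (Polynomial.C q).degree + Polynomial.X.degree :=
                Polynomial.degree_mul_le _ _
            _ ≤ 0 + 1 := by
                apply add_le_add Polynomial.degree_C_le
                simp [Polynomial.degree_X]
            _ = 1 := by norm_num
      _ < 2 := by norm_num
  constructor
  · have := congrArg (fun r => Polynomial.coeff r 0) hz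
    simpa using this
  · have := congrArg (fun r => Polynomial.coeff r 1) hz
    simpa using this

lemma elt_sub (p q p' q' : RR) : elt p q - elt p' q' = elt (p - p') (q - q') := by
  rw [elt, elt, elt, ← map_sub]
  congr 1
  rw [Polynomial.C_sub, Polynomial.C_sub]
  ring

lemma elt_inj {p q p' q' : RR} (h : elt p q = elt p' q') : p = p' ∧ q = q' := by
  have h0 : elt (p - p') (q - q') = 0 := by rw [← elt_sub, h, sub_self]
  have h1 := elt_eq_zero h0
  exact ⟨sub_eq_zero.mp h1.1, sub_eq_zero.mp h1.2⟩

lemma elt_mul (p₁ q₁ p₂ q₂ : RR) :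
    elt p₁ q₁ * elt p₂ q₂ = elt (p₁ * p₂ + cc * q₁ * q₂) (p₁ * q₂ + p₂ * q₁) := by
  rw [elt, elt, elt, ← map_mul, ← sub_eq_zero, ← map_sub, AdjoinRoot.mk_eq_zero]
  refine ⟨Polynomial.C (q₁ * q₂), ?_⟩
  rw [ff]
  simp [Polynomial.C_add, Polynomial.C_mul]
  ring

end CircleAux

noncomputable section CircleAux2


noncomputable def Nrm (p q : RR) : RR := p ^ 2 - cc * q ^ 2

lemma Nrm_mul (p₁ q₁ p₂ q₂ : RR) :
    Nrm (p₁ * p₂ + cc * q₁ * q₂) (p₁ * q₂ + p₂ * q₁) = Nrm p₁ q₁ * Nrm p₂ q₂ := by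
  unfold Nrm; ring

lemma nrm_deg {p q : RR} (hq : q ≠ 0) : ((2:ℕ) : WithBot ℕ) ≤ (Nrm p q).degree := by
  have hN : Nrm p q = p ^ 2 + (Polynomial.X ^ 2 - 1) * q ^ 2 := by unfold Nrm cc; ring
  set B := (Polynomial.X ^ 2 - 1 : RR) * q ^ 2 with hB
  have hm : (Polynomial.X ^ 2 - 1 : RR).Monic := by
    apply Polynomial.monic_X_pow_sub
    calc (1 : RR).degree ≤ 0 := Polynomial.degree_one_le
    _ < (2:ℕ) := by norm_num
  have hB0 : B ≠ 0 := mul_ne_zero hm.ne_zero (pow_ne_zero 2 hq)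
  have hdB : ((2:ℕ) : WithBot ℕ) ≤ B.degree := by
    rw [hB, Polynomial.degree_mul]
    have h2 : (Polynomial.X ^ 2 - 1 : RR).degree = 2 := by
      rw [Polynomial.degree_sub_eq_left_of_degree_lt] <;> simp
    rw [h2]
    have : (0 : WithBot ℕ) ≤ (q ^ 2).degree :=
      Polynomial.zero_le_degree_iff.mpr (pow_ne_zero 2 hq)
    calc ((2:ℕ) : WithBot ℕ) = 2 + 0 := by norm_num
    _ ≤ 2 + (q ^ 2).degree := by exact add_le_add (le_refl 2) this
  have hlB : 0 < B.leadingCoeff := by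
    rw [hB, Polynomial.leadingCoeff_mul, hm.leadingCoeff, one_mul, Polynomial.leadingCoeff_pow]
    exact pow_two_pos_of_ne_zero (Polynomial.leadingCoeff_ne_zero.mpr hq)
  by_cases hp : p = 0
  · rw [hN, hp]
    simpa using hdB
  have hA0 : (p ^ 2 : RR) ≠ 0 := pow_ne_zero _ hp
  rcases lt_trichotomy (p ^ 2 : RR).degree B.degree with h | h | h
  · rw [hN, Polynomial.degree_add_eq_right_of_degree_lt h]; exact hdB
  · have hd : (p ^ 2 : RR).natDegree = B.natDegree := Polynomial.natDegree_eq_of_degree_eq h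
    have hlA : 0 < (p ^ 2 : RR).leadingCoeff := by
      rw [Polynomial.leadingCoeff_pow]
      exact pow_two_pos_of_ne_zero (Polynomial.leadingCoeff_ne_zero.mpr hp)
    have hcoeff : (Nrm p q).coeff B.natDegree ≠ 0 := by
      rw [hN, Polynomial.coeff_add, ← hd, Polynomial.coeff_natDegree, hd,
        Polynomial.coeff_natDegree]
      positivity
    have h1 : ((B.natDegree : ℕ) : WithBot ℕ) ≤ (Nrm p q).degree :=
      Polynomial.le_degree_of_ne_zero hcoeff
    have h2 : ((2:ℕ) : WithBot ℕ) ≤ (B.natDegree : WithBot ℕ) := by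
      rwa [← Polynomial.degree_eq_natDegree hB0]
    exact le_trans h2 h1
  · rw [hN, Polynomial.degree_add_eq_left_of_degree_lt h]
    exact le_trans hdB (le_of_lt h)

lemma nrm_ne_zero {p q : RR} (h : ¬ (p = 0 ∧ q = 0)) : Nrm p q ≠ 0 := by
  by_cases hq : q = 0
  · have hp : p ≠ 0 := fun hp => h ⟨hp, hq⟩
    simp only [Nrm, hq]
    intro hc
    apply pow_ne_zero 2 hp
    linear_combination hc
  · intro hc
    have := nrm_deg (p := p) hq
    rw [hc] at this
    simp at this

end CircleAux2

noncomputable section CircleAux3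

lemma key : ¬ (Ideal.span {elt (1 + Polynomial.X) 0, elt 0 1} : Ideal AA).IsPrincipal := by
  rintro ⟨d, hd'⟩
  obtain ⟨p, q, rfl⟩ := repr_exists d
  have hd : Ideal.span {elt (1 + Polynomial.X) 0, elt 0 1} = Ideal.span {elt p q} := hd'
  have ha : elt (1 + Polynomial.X) 0 ∈ Ideal.span {elt p q} := by
    rw [← hd]; exact Ideal.subset_span (Set.mem_insert _ _)
  have hb : elt 0 1 ∈ Ideal.span {elt p q} := by
    rw [← hd]; exact Ideal.subset_span (by simp)
  -- d ≠ 0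
  have hd0 : ¬ (p = 0 ∧ q = 0) := by
    rintro ⟨rfl, rfl⟩
    have h00 : elt (0:RR) 0 = 0 := by
      simp [elt]
    rw [h00, Ideal.mem_span_singleton] at hb
    have := elt_eq_zero ((zero_dvd_iff.mp hb))
    simpa using this.2
  -- norms divide
  obtain ⟨u, hu⟩ := Ideal.mem_span_singleton'.mp ha
  obtain ⟨p₂, q₂, rfl⟩ := repr_exists u
  rw [elt_mul] at hu
  obtain ⟨e1, e2⟩ := elt_inj hu
  have dvd1 : Nrm p q ∣ (1 + Polynomial.X : RR) ^ 2 := by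
    refine ⟨Nrm p₂ q₂, ?_⟩
    have := Nrm_mul p₂ q₂ p q
    rw [e1, e2] at this
    unfold Nrm cc at this ⊢
    linear_combination this
  obtain ⟨v, hv⟩ := Ideal.mem_span_singleton'.mp hb
  obtain ⟨p₃, q₃, rfl⟩ := repr_exists v
  rw [elt_mul] at hv
  obtain ⟨e3, e4⟩ := elt_inj hv
  have dvd2 : Nrm p q ∣ (Polynomial.X ^ 2 - 1 : RR) := by
    refine ⟨Nrm p₃ q₃, ?_⟩
    have := Nrm_mul p₃ q₃ p q
    rw [e3, e4] at this
    unfold Nrm cc at this ⊢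
    linear_combination this
  have dvd3 : Nrm p q ∣ (2 * Polynomial.X + 2 : RR) := by
    have h := dvd_sub dvd1 dvd2
    have e : (1 + Polynomial.X : RR) ^ 2 - (Polynomial.X ^ 2 - 1) = 2 * Polynomial.X + 2 := by ring
    rwa [e] at h
  have hlin0 : (2 * Polynomial.X + 2 : RR) ≠ 0 := by
    intro hc
    have := congrArg (fun r => Polynomial.coeff r 1) hc
    simp at this
  have hN0 : Nrm p q ≠ 0 := nrm_ne_zero hd0
  have h2 := Polynomial.degree_le_of_dvd dvd3 hlin0
  have h3 : (2 * Polynomial.X + 2 : RR).degree ≤ 1 := by compute_degree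
  -- q = 0
  have hq : q = 0 := by
    by_contra hq
    have h1 := nrm_deg (p := p) hq
    have : ((2:ℕ) : WithBot ℕ) ≤ 1 := le_trans h1 (le_trans h2 h3)
    norm_num at this
  subst hq
  have hp : p ≠ 0 := fun hp => hd0 ⟨hp, rfl⟩
  -- p is a nonzero constant
  have hdegp : p.natDegree = 0 := by
    have hNp : Nrm p 0 = p ^ 2 := by unfold Nrm; ring
    have h4 : (p ^ 2 : RR).degree ≤ 1 := le_trans (hNp ▸ h2) h3
    have h5 : (p ^ 2 : RR).natDegree ≤ 1 := Polynomial.natDegree_le_iff_degree_le.mpr h4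
    rw [Polynomial.natDegree_pow] at h5
    omega
  have hk : p = Polynomial.C (p.coeff 0) := Polynomial.eq_C_of_natDegree_eq_zero hdegp
  have hk0 : p.coeff 0 ≠ 0 := by
    intro hc; apply hp; rw [hk, hc, map_zero]
  -- d is a unit, so the ideal is ⊤
  have hunit : IsUnit (elt p 0) := by
    have : elt p 0 = ((AdjoinRoot.mk ff).comp ((Polynomial.C (R := RR)).comp (Polynomial.C (R := ℝ)))) (p.coeff 0) := by
      rw [elt]
      simp only [RingHom.comp_apply]
      rw [← hk]
      congr 1
      simp
    rw [this]
    exact (isUnit_iff_ne_zero.mpr hk0).map _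
  have htop : Ideal.span {elt (1 + Polynomial.X) 0, elt 0 1} = (⊤ : Ideal AA) := by
    rw [hd]
    exact Ideal.span_singleton_eq_top.mpr hunit
  -- evaluation at (-1, 0) kills the ideal but not 1
  have hroot : Polynomial.eval₂ (Polynomial.evalRingHom (-1 : ℝ)) 0 ff = 0 := by
    rw [ff, Polynomial.eval₂_sub, Polynomial.eval₂_pow, Polynomial.eval₂_X, Polynomial.eval₂_C,
      Polynomial.coe_evalRingHom, cc]
    simp
  set φ : AA →+* ℝ := AdjoinRoot.lift (Polynomial.evalRingHom (-1 : ℝ)) 0 hroot with hφ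
  have hker : Ideal.span {elt (1 + Polynomial.X) 0, elt 0 1} ≤ RingHom.ker φ := by
    rw [Ideal.span_le]
    rintro z hz
    simp only [Set.mem_insert_iff, Set.mem_singleton_iff] at hz
    rcases hz with rfl | rfl <;>
      simp [RingHom.mem_ker, hφ, elt, AdjoinRoot.lift_mk]
  rw [htop] at hker
  have h1 : (1 : AA) ∈ RingHom.ker φ := hker trivial
  rw [RingHom.mem_ker, map_one] at h1
  exact one_ne_zero h1

end CircleAux3

noncomputable section CircleAux4
open MvPolynomial

noncomputable def Eqv : MvPolynomial (Fin 2) ℝ ≃ₐ[ℝ] Polynomial RR :=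
  (MvPolynomial.renameEquiv ℝ (Equiv.swap 0 1)).trans
    ((MvPolynomial.finSuccEquiv ℝ 1).trans
      (Polynomial.mapAlgEquiv ((MvPolynomial.finSuccEquiv ℝ 0).trans
        (Polynomial.mapAlgEquiv (MvPolynomial.isEmptyAlgEquiv ℝ (Fin 0))))))

lemma Eqv_X0 : Eqv (X 0) = Polynomial.C Polynomial.X := by
  have h1 : ((Equiv.swap (0 : Fin 2) 1) 0) = Fin.succ 0 := rfl
  rw [Eqv]
  simp only [AlgEquiv.trans_apply, MvPolynomial.renameEquiv_apply, MvPolynomial.rename_X, h1,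
    MvPolynomial.finSuccEquiv_X_succ, Polynomial.coe_mapAlgEquiv, Polynomial.map_C,
    MvPolynomial.finSuccEquiv_X_zero, Polynomial.map_X]
  congr 1
  simp only [RingHom.coe_coe, AlgEquiv.trans_apply, MvPolynomial.finSuccEquiv_X_zero,
    Polynomial.coe_mapAlgEquiv, Polynomial.map_X]

lemma Eqv_X1 : Eqv (X 1) = Polynomial.X := by
  have h2 : ((Equiv.swap (0 : Fin 2) 1) 1) = 0 := rfl
  rw [Eqv]
  simp only [AlgEquiv.trans_apply, MvPolynomial.renameEquiv_apply, MvPolynomial.rename_X, h2,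
    MvPolynomial.finSuccEquiv_X_zero, Polynomial.coe_mapAlgEquiv, Polynomial.map_X]

lemma Eqv_g : Eqv ((X 0 : MvPolynomial (Fin 2) ℝ) ^ 2 + X 1 ^ 2 - 1) = ff := by
  rw [map_sub, map_add, map_pow, map_pow, map_one, Eqv_X0, Eqv_X1, ff, cc,
    Polynomial.C_sub, Polynomial.C_1, map_pow]
  ring

lemma span_eq : Ideal.span {ff} =
    Ideal.map (Eqv.toRingEquiv : MvPolynomial (Fin 2) ℝ ≃+* Polynomial RR)
      (Ideal.span {(X 0 : MvPolynomial (Fin 2) ℝ) ^ 2 + X 1 ^ 2 - 1}) := by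
  rw [Ideal.map_span, Set.image_singleton]
  congr 1
  rw [← Eqv_g]
  rfl

end CircleAux4

noncomputable section CircleFinal
open MvPolynomial

noncomputable abbrev circleRingR' : Type :=
  MvPolynomial (Fin 2) ℝ ⧸
    Ideal.span {(X 0 : MvPolynomial (Fin 2) ℝ) ^ 2 + X 1 ^ 2 - 1}

noncomputable def Etop : circleRingR' ≃+* AA :=
  Ideal.quotientEquiv _ _ Eqv.toRingEquiv span_eq

lemma Etop_mk (a : MvPolynomial (Fin 2) ℝ) :
    Etop (Ideal.Quotient.mk _ a) = AdjoinRoot.mk ff (Eqv a) := by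
  exact Ideal.quotientEquiv_mk _ _ _ _ a

lemma Etop_one_add_x :
    Etop (1 + Ideal.Quotient.mk _ (X 0)) = elt (1 + Polynomial.X) 0 := by
  have h : (1 : circleRingR') + Ideal.Quotient.mk _ (X 0) =
      Ideal.Quotient.mk _ ((1 : MvPolynomial (Fin 2) ℝ) + X 0) := by
    rw [map_add, map_one]
  rw [h, Etop_mk, map_add, map_one, Eqv_X0, elt]
  congr 1
  simp

lemma Etop_y : Etop (Ideal.Quotient.mk _ (X 1)) = elt 0 1 := by
  rw [Etop_mk, Eqv_X1, elt]
  congr 1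
  simp

theorem stmt_7' :
    ¬ (Ideal.span {1 + Ideal.Quotient.mk _ (X 0), Ideal.Quotient.mk _ (X 1)} : Ideal circleRingR').IsPrincipal := by
  rintro ⟨d, hd⟩
  have hd2 : (Ideal.span {1 + Ideal.Quotient.mk _ (X 0), Ideal.Quotient.mk _ (X 1)} : Ideal circleRingR')
      = Ideal.span {d} := hd
  apply key
  refine ⟨Etop d, ?_⟩
  have h1 : Ideal.span {elt (1 + Polynomial.X) 0, elt 0 1} =
      Ideal.map (Etop : circleRingR' →+* AA)
        (Ideal.span {1 + Ideal.Quotient.mk _ (X 0), Ideal.Quotient.mk _ (X 1)}) := by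
    rw [Ideal.map_span, Set.image_insert_eq, Set.image_singleton]
    simp only [RingEquiv.coe_toRingHom, RingHom.coe_coe]
    rw [Etop_one_add_x, Etop_y]
  have h2 : Ideal.map (Etop : circleRingR' →+* AA) (Ideal.span {d}) = Ideal.span {Etop d} := by
    rw [Ideal.map_span, Set.image_singleton]
    rfl
  rw [h1, hd2, h2]

end CircleFinal

open Polynomial in
theorem stmt_7 :
    ¬ (Ideal.span {1 + xClass, yClass} : Ideal circleRingR).IsPrincipal := by
  exact stmt_7'
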